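/- (Theorem 2.14) Let M = S × N, where S and N are topological spaces, and let Φ be a continuous semi-process on M. Let W ⊂ M × ℝ be an open set with W⁻ = W⁻⁻ and W₀⁻⁻ ≠ ∅. Let {x₀} × N ⊂ M be a uniformly Lyapunov stable invariant manifold of Φ, let U ⊂ S be open with x₀ ∈ U, and suppose closure(U) × N × ℝ ⊂ W. Suppose there is a continuous path Γ : [0,1] → M × ℝ with Γ(s) ∈ W₀ for all s ∈ (0,1), π_M(Γ(0)) ∈ {x₀} × N, and Γ(1) ∈ ∂W ∩ W₀⁻⁻, where π_M : M × ℝ → M is the canonical projection. Then {x₀} × N is not globally attractive for Φ, i.e., there exists a point (x,y) ∈ M such that Φ_{0,t}(x,y) does not converge to the set {x₀} × N as t → ∞. -/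

import Mathlib

open scoped ENNReal

/-- The egress time of `x` (with initial time `0`) from `W ⊆ M × ℝ` for the
semi-process `Φ` (written `Φ x t₀ t` for `Φ_{t₀,t}(x)`):
`σ(x) = sup {τ ≥ 0 : (Φ_{0,t}(x), t) ∈ W for all t ∈ [0, τ)}`, valued in `ℝ≥0∞`.
For `(x, 0) ∈ ∂W` this supremum equals `0`. -/
noncomputable def spEgressTime {M : Type*}
    (Φ : M → ℝ → ℝ → M) (W : Set (M × ℝ)) (x : M) : ℝ≥0∞ :=
  sSup {τ : ℝ≥0∞ | ∀ t : ℝ, 0 ≤ t → ENNReal.ofReal t < τ → (Φ x 0 t, t) ∈ W}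

/-- Egress points of `W ⊆ M × ℝ` for the semi-process `Φ`: boundary points
`(x₁, t₁)` such that either `t₁ > 0` and `(x₁, t₁) = (Φ_{0,σ(x)}(x), σ(x))` for some
`(x, 0) ∈ W`, or `t₁ = 0` and the forward trajectory of `x₁` leaves `W ∪ ∂W`
immediately. -/
def spEgress {M : Type*} [TopologicalSpace M]
    (Φ : M → ℝ → ℝ → M) (W : Set (M × ℝ)) : Set (M × ℝ) :=
  {p ∈ frontier W |
    (0 < p.2 ∧ ∃ x : M, (x, (0 : ℝ)) ∈ W ∧ spEgressTime Φ W x ≠ ⊤ ∧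
      p.2 = (spEgressTime Φ W x).toReal ∧ p.1 = Φ x 0 (spEgressTime Φ W x).toReal) ∨
    (p.2 = 0 ∧ ∃ ε > (0 : ℝ), ∀ t ∈ Set.Ioo (0 : ℝ) ε, (Φ p.1 0 t, t) ∉ W ∪ frontier W)}

/-- Strict egress points of `W ⊆ M × ℝ` for the semi-process `Φ`: egress points
whose continued trajectory stays outside `W ∪ ∂W` for a positive time interval
(by the semigroup property, `(Φ_{0,σ(x)+t}(x), σ(x)+t) = (Φ_{t₁,t}(x₁), t₁ + t)`). -/
def spStrictEgress {M : Type*} [TopologicalSpace M]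
    (Φ : M → ℝ → ℝ → M) (W : Set (M × ℝ)) : Set (M × ℝ) :=
  {p ∈ spEgress Φ W |
    ∃ ε > (0 : ℝ), ∀ t ∈ Set.Ioo (0 : ℝ) ε, (Φ p.1 p.2 t, p.2 + t) ∉ W ∪ frontier W}

/-- The section `S_τ = {(x, t) ∈ S : t = τ}` of a subset of the extended phase space. -/
def timeSection {M : Type*} (S : Set (M × ℝ)) (τ : ℝ) : Set (M × ℝ) :=
  {p ∈ S | p.2 = τ}

/-- Theorem 2.14: for a continuous semi-process `Φ` on `M = S × N` and an open
`W ⊆ M × ℝ` with `W⁻ = W⁻⁻` and `W₀⁻⁻ ≠ ∅`, if `{x₀} × N` is a uniformly Lyapunov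
stable invariant manifold, `U ⊆ S` is open with `x₀ ∈ U` and
`closure U × N × ℝ ⊆ W`, and `Γ` is a continuous path with `Γ(s) ∈ W₀` for
`s ∈ (0,1)`, `π_M(Γ(0)) ∈ {x₀} × N` and `Γ(1) ∈ ∂W ∩ W₀⁻⁻`, then `{x₀} × N` is
not globally attractive: some trajectory does not converge to the set `{x₀} × N`. -/
theorem invariant_manifold_not_globally_attractive
    {S N : Type*} [TopologicalSpace S] [TopologicalSpace N]
    (Φ : S × N → ℝ → ℝ → S × N)
    (hΦcont : ContinuousOn (fun q : (S × N) × ℝ × ℝ => Φ q.1 q.2.1 q.2.2) {q | 0 ≤ q.2.2})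
    (hΦ0 : ∀ p t₀, Φ p t₀ 0 = p)
    (hΦadd : ∀ (p : S × N) (t₀ t s : ℝ), 0 ≤ t → 0 ≤ s →
      Φ p t₀ (t + s) = Φ (Φ p t₀ t) (t₀ + t) s)
    (W : Set ((S × N) × ℝ)) (hWopen : IsOpen W)
    (hWeq : spEgress Φ W = spStrictEgress Φ W)
    (hW0e : (timeSection (spStrictEgress Φ W) 0).Nonempty)
    (x₀ : S)
    (hinv : ∀ (y : N) (t₀ : ℝ), ∀ t ≥ (0 : ℝ), (Φ (x₀, y) t₀ t).1 = x₀)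
    (hstab : ∀ U' : Set S, IsOpen U' → x₀ ∈ U' → ∃ V : Set S, IsOpen V ∧ x₀ ∈ V ∧
      ∀ x ∈ V, ∀ (y : N) (t₀ : ℝ), ∀ t ≥ (0 : ℝ), (Φ (x, y) t₀ t).1 ∈ U')
    (U : Set S) (hUopen : IsOpen U) (hx₀U : x₀ ∈ U)
    (hUW : ((closure U) ×ˢ (Set.univ : Set N)) ×ˢ (Set.univ : Set ℝ) ⊆ W)
    (Γ : ℝ → (S × N) × ℝ) (hΓcont : ContinuousOn Γ (Set.Icc 0 1))
    (hΓW : ∀ s ∈ Set.Ioo (0 : ℝ) 1, Γ s ∈ timeSection W 0)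
    (hΓ0 : (Γ 0).1 ∈ ({x₀} : Set S) ×ˢ (Set.univ : Set N))
    (hΓ1 : Γ 1 ∈ frontier W ∩ timeSection (spStrictEgress Φ W) 0) :
    ∃ p : S × N, ¬ Filter.Tendsto (fun t => Φ p 0 t) Filter.atTop
      (nhdsSet (({x₀} : Set S) ×ˢ (Set.univ : Set N))) := by
  classical
  by_contra hcontra
  push_neg at hcontra
  -- continuous extension of the flow to all times
  have hΨcont : Continuous (fun q : (S × N) × ℝ × ℝ => Φ q.1 q.2.1 (max q.2.2 0)) := by
    have h1 : Continuous fun q : (S × N) × ℝ × ℝ =>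
        ((q.1, q.2.1, max q.2.2 0) : (S × N) × ℝ × ℝ) := by fun_prop
    have h2 := hΦcont.comp (h1.continuousOn (s := Set.univ))
      (fun q _ => (le_max_right _ _ : (0:ℝ) ≤ max q.2.2 0))
    rw [← continuousOn_univ]
    exact h2
  -- basic lemmas about the egress time
  have memW_of_lt : ∀ (p : S × N) (t : ℝ), 0 ≤ t →
      ENNReal.ofReal t < spEgressTime Φ W p → (Φ p 0 t, t) ∈ W := by
    intro p t ht hlt
    rw [spEgressTime, lt_sSup_iff] at hlt
    obtain ⟨τ, hτ, hlt⟩ := hlt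
    exact hτ t ht hlt
  have sigma_le : ∀ (p : S × N) (t : ℝ), 0 ≤ t → (Φ p 0 t, t) ∉ W →
      spEgressTime Φ W p ≤ ENNReal.ofReal t := by
    intro p t ht hnot
    refine sSup_le fun τ hτ => ?_
    by_contra hle
    exact hnot (hτ t ht (not_le.mp hle))
  have lt_sigma : ∀ (p : S × N) (a : ℝ), 0 ≤ a →
      (∀ t ∈ Set.Icc (0:ℝ) a, (Φ p 0 t, t) ∈ W) →
      ENNReal.ofReal a < spEgressTime Φ W p := by
    intro p a ha hIcc
    have hc : Continuous fun t : ℝ => ((Φ p 0 (max t 0), t) : (S × N) × ℝ) := by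
      refine Continuous.prodMk ?_ continuous_id
      exact hΨcont.comp (continuous_const.prodMk (continuous_const.prodMk continuous_id))
    have hWa : (Φ p 0 (max a 0), a) ∈ W := by
      rw [max_eq_left ha]; exact hIcc a ⟨ha, le_refl _⟩
    have hev : ∀ᶠ t in nhds a, ((Φ p 0 (max t 0), t) : (S × N) × ℝ) ∈ W :=
      hc.continuousAt.eventually_mem (hWopen.mem_nhds hWa)
    obtain ⟨δ, hδ, hball⟩ := Metric.eventually_nhds_iff.mp hev
    have hmem : ENNReal.ofReal (a + δ/2) ∈
        {τ : ℝ≥0∞ | ∀ t : ℝ, 0 ≤ t → ENNReal.ofReal t < τ → (Φ p 0 t, t) ∈ W} := by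
      intro t ht hlt
      have htlt : t < a + δ/2 := (ENNReal.ofReal_lt_ofReal_iff_of_nonneg ht).mp hlt
      rcases le_or_gt t a with h | h
      · exact hIcc t ⟨ht, h⟩
      · have := hball (y := t) (by rw [Real.dist_eq, abs_sub_lt_iff]; constructor <;> linarith)
        rwa [max_eq_left ht] at this
    calc ENNReal.ofReal a < ENNReal.ofReal (a + δ/2) :=
          (ENNReal.ofReal_lt_ofReal_iff (by linarith)).mpr (by linarith)
      _ ≤ spEgressTime Φ W p := le_sSup hmem
  have closure_sub : closure W ⊆ W ∪ frontier W := by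
    intro x hx
    by_cases hxW : x ∈ W
    · exact Or.inl hxW
    · exact Or.inr ⟨hx, by rw [hWopen.interior_eq]; exact hxW⟩
  -- a point with (p,0) ∈ W and finite egress time eventually leaves the closure of W
  have egress_mem : ∀ p : S × N, (p, (0:ℝ)) ∈ W → spEgressTime Φ W p ≠ ⊤ →
      ∃ t₁ : ℝ, 0 ≤ t₁ ∧ (Φ p 0 t₁, t₁) ∉ closure W := by
    intro p hpW hne
    have hσpos : 0 < spEgressTime Φ W p := by
      have := lt_sigma p 0 le_rfl (by
        intro t ht
        have : t = 0 := le_antisymm ht.2 ht.1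
        rw [this, hΦ0]; exact hpW)
      simpa using this
    set a := (spEgressTime Φ W p).toReal with ha_def
    have ha : 0 < a := ENNReal.toReal_pos (ne_of_gt hσpos) hne
    have hW_lt : ∀ t : ℝ, 0 ≤ t → t < a → (Φ p 0 t, t) ∈ W := by
      intro t ht hta
      exact memW_of_lt p t ht ((ENNReal.ofReal_lt_iff_lt_toReal ht hne).mpr hta)
    have hnotW : (Φ p 0 a, a) ∉ W := by
      intro hWa
      have : ENNReal.ofReal a < spEgressTime Φ W p := by
        refine lt_sigma p a ha.le ?_
        intro t ht
        rcases lt_or_eq_of_le ht.2 with h | h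
        · exact hW_lt t ht.1 h
        · rw [h]; exact hWa
      rw [ha_def, ENNReal.ofReal_toReal hne] at this
      exact lt_irrefl _ this
    have hcl : ((Φ p 0 a, a) : (S × N) × ℝ) ∈ closure W := by
      by_contra hnc
      have hc : Continuous fun t : ℝ => ((Φ p 0 (max t 0), t) : (S × N) × ℝ) := by
        refine Continuous.prodMk ?_ continuous_id
        exact hΨcont.comp (continuous_const.prodMk (continuous_const.prodMk continuous_id))
      have hev : ∀ᶠ t in nhds a, ((Φ p 0 (max t 0), t) : (S × N) × ℝ) ∈ (closure W)ᶜ := by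
        refine hc.continuousAt.eventually_mem (isClosed_closure.isOpen_compl.mem_nhds ?_)
        rwa [max_eq_left ha.le]
      obtain ⟨δ, hδ, hball⟩ := Metric.eventually_nhds_iff.mp hev
      set t := a - min (δ/2) (a/2) with ht_def
      have hmpos : 0 < min (δ/2) (a/2) := lt_min (by linarith) (by linarith)
      have hmle : min (δ/2) (a/2) ≤ δ/2 := min_le_left _ _
      have hmle' : min (δ/2) (a/2) ≤ a/2 := min_le_right _ _
      have h1 : 0 < t := by simp only [ht_def]; linarith
      have h2 : t < a := by simp only [ht_def]; linarith
      have h3 : (Φ p 0 (max t 0), t) ∈ (closure W)ᶜ := by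
        refine hball ?_
        rw [Real.dist_eq, abs_sub_lt_iff]
        constructor <;> simp only [ht_def] <;> linarith
      rw [max_eq_left h1.le] at h3
      exact h3 (subset_closure (hW_lt t h1.le h2))
    have hfr : ((Φ p 0 a, a) : (S × N) × ℝ) ∈ frontier W := by
      rw [frontier, hWopen.interior_eq]; exact ⟨hcl, hnotW⟩
    have hegr : ((Φ p 0 a, a) : (S × N) × ℝ) ∈ spEgress Φ W :=
      ⟨hfr, Or.inl ⟨ha, p, hpW, hne, rfl, rfl⟩⟩
    rw [hWeq] at hegr
    obtain ⟨_, ε, hε, hout⟩ := hegr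
    refine ⟨a + ε/2, by linarith, ?_⟩
    have hkey := hout (ε/2) ⟨by linarith, by linarith⟩
    have h5 : Φ p 0 (a + ε/2) = Φ (Φ p 0 a) a (ε/2) := by
      have := hΦadd p 0 a (ε/2) ha.le (by linarith)
      rwa [zero_add] at this
    rw [h5]
    intro hmem
    exact hkey (closure_sub hmem)
  -- the trajectory starting on the invariant manifold never leaves W
  have base0 : spEgressTime Φ W (Γ 0).1 = ⊤ := by
    have hx : ((Γ 0).1).1 = x₀ := hΓ0.1
    have hpt : (Γ 0).1 = (x₀, ((Γ 0).1).2) := by rw [← hx]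
    refine top_unique (le_sSup ?_)
    intro t ht _
    refine hUW ⟨⟨?_, Set.mem_univ _⟩, Set.mem_univ _⟩
    rw [hpt, hinv ((Γ 0).1).2 0 t ht]
    exact subset_closure hx₀U
  -- the endpoint of the path has egress time 0 (in particular finite)
  obtain ⟨⟨_, ε₁, hε₁, hout₁⟩, hΓ1t⟩ := hΓ1.2
  rw [hΓ1t] at hout₁
  simp only [zero_add] at hout₁
  have base1 : spEgressTime Φ W (Γ 1).1 ≠ ⊤ := by
    have h := hout₁ (ε₁/2) ⟨by linarith, by linarith⟩
    have := sigma_le (Γ 1).1 (ε₁/2) (by linarith) (fun hm => h (Or.inl hm))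
    exact ne_top_of_le_ne_top ENNReal.ofReal_ne_top this
  -- existence of an exit point for any parameter with finite egress time
  have exit_pt : ∀ s : ℝ, s ∈ Set.Icc (0:ℝ) 1 → spEgressTime Φ W (Γ s).1 ≠ ⊤ →
      ∃ t₁ : ℝ, 0 ≤ t₁ ∧ (Φ (Γ s).1 0 t₁, t₁) ∉ closure W := by
    intro s hs hne
    rcases eq_or_lt_of_le hs.2 with h1 | h1
    · subst h1
      refine ⟨ε₁/2, by linarith, ?_⟩
      intro hmem
      exact hout₁ (ε₁/2) ⟨by linarith, by linarith⟩ (closure_sub hmem)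
    · rcases eq_or_lt_of_le hs.1 with h0 | h0
      · exact absurd base0 (by rw [← h0] at hne; exact hne)
      · have hmem := hΓW s ⟨h0, h1⟩
        have hΓsW : ((Γ s).1, (0:ℝ)) ∈ W := by
          obtain ⟨hW', ht'⟩ := hmem
          rwa [← ht', Prod.mk.eta]
        exact egress_mem (Γ s).1 hΓsW hne
  -- set up the connectedness argument on the subtype
  obtain ⟨V, hVopen, hx₀V, hV⟩ := hstab U hUopen hx₀U
  haveI : PreconnectedSpace (Set.Icc (0:ℝ) 1) :=
    Subtype.preconnectedSpace isPreconnected_Icc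
  set A : Set (Set.Icc (0:ℝ) 1) :=
    {s | spEgressTime Φ W (Γ (s:ℝ)).1 = ⊤} with hA_def
  have hgcont : Continuous fun s : Set.Icc (0:ℝ) 1 => (Γ (s:ℝ)).1 :=
    continuous_fst.comp hΓcont.restrict
  have hGcont : Continuous fun q : (Set.Icc (0:ℝ) 1) × ℝ =>
      ((Φ (Γ (q.1:ℝ)).1 0 (max q.2 0), q.2) : (S × N) × ℝ) := by
    refine Continuous.prodMk ?_ continuous_snd
    exact hΨcont.comp (((hgcont.comp continuous_fst).prodMk
      (continuous_const.prodMk continuous_snd)))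
  have hAopen : IsOpen A := by
    rw [isOpen_iff_mem_nhds]
    intro s hs
    have hs' : spEgressTime Φ W (Γ (s:ℝ)).1 = ⊤ := hs
    -- the trajectory converges, so it eventually enters V × N
    have hVnhds : (V ×ˢ (Set.univ : Set N)) ∈
        nhdsSet (({x₀} : Set S) ×ˢ (Set.univ : Set N)) :=
      (hVopen.prod isOpen_univ).mem_nhdsSet.mpr
        (Set.prod_mono (Set.singleton_subset_iff.mpr hx₀V) subset_rfl)
    have hev := (hcontra (Γ (s:ℝ)).1).eventually_mem hVnhds
    obtain ⟨T₀, hT₀⟩ := Filter.eventually_atTop.mp hev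
    set T := max T₀ 0 with hT_def
    have hT0 : (0:ℝ) ≤ T := le_max_right _ _
    have hTV : (Φ (Γ (s:ℝ)).1 0 T).1 ∈ V := (hT₀ T (le_max_left _ _)).1
    -- tube lemma: nearby trajectories stay in W up to time T
    have htube : ∀ᶠ s' : Set.Icc (0:ℝ) 1 in nhds s, ∀ t ∈ Set.Icc (0:ℝ) T,
        ((Φ (Γ (s':ℝ)).1 0 (max t 0), t) : (S × N) × ℝ) ∈ W := by
      refine (isCompact_Icc (a := (0:ℝ)) (b := T)).eventually_forall_of_forall_eventually ?_
      intro t ht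
      have hWmem : ((Φ (Γ (s:ℝ)).1 0 (max t 0), t) : (S × N) × ℝ) ∈ W := by
        rw [max_eq_left ht.1]
        exact memW_of_lt _ t ht.1 (by rw [hs']; exact ENNReal.ofReal_lt_top)
      exact hGcont.continuousAt.eventually_mem (hWopen.mem_nhds hWmem)
    -- nearby trajectories are in V × N at time T
    have hevV : ∀ᶠ s' : Set.Icc (0:ℝ) 1 in nhds s, (Φ (Γ (s':ℝ)).1 0 (max T 0)).1 ∈ V := by
      have hc : Continuous fun s' : Set.Icc (0:ℝ) 1 =>
          (Φ (Γ (s':ℝ)).1 0 (max T 0)).1 :=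
        ((hGcont.comp (continuous_id.prodMk continuous_const)).fst).fst
      refine hc.continuousAt.eventually_mem (hVopen.mem_nhds ?_)
      rwa [max_eq_left hT0]
    filter_upwards [htube, hevV] with s' h1 h2
    show spEgressTime Φ W (Γ (s':ℝ)).1 = ⊤
    refine top_unique (le_sSup ?_)
    intro t ht _
    rcases le_or_gt t T with hle | hlt
    · have := h1 t ⟨ht, hle⟩
      rwa [max_eq_left ht] at this
    · rw [max_eq_left hT0] at h2
      have heq : Φ (Γ (s':ℝ)).1 0 t = Φ (Φ (Γ (s':ℝ)).1 0 T) (0 + T) (t - T) := by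
        have := hΦadd (Γ (s':ℝ)).1 0 T (t - T) hT0 (by linarith)
        rwa [add_sub_cancel] at this
      refine hUW ⟨⟨?_, Set.mem_univ _⟩, Set.mem_univ _⟩
      rw [heq]
      have hU1 : (Φ ((Φ (Γ (s':ℝ)).1 0 T).1, (Φ (Γ (s':ℝ)).1 0 T).2) (0 + T) (t - T)).1 ∈ U :=
        hV _ h2 _ (0 + T) (t - T) (by linarith)
      rw [Prod.mk.eta] at hU1
      exact subset_closure hU1
  have hBopen : IsOpen Aᶜ := by
    rw [isOpen_iff_mem_nhds]
    intro s hs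
    have hs' : spEgressTime Φ W (Γ (s:ℝ)).1 ≠ ⊤ := hs
    obtain ⟨t₁, ht₁, hout⟩ := exit_pt (s:ℝ) s.2 hs'
    have hc : Continuous fun s' : Set.Icc (0:ℝ) 1 =>
        ((Φ (Γ (s':ℝ)).1 0 (max t₁ 0), t₁) : (S × N) × ℝ) :=
      hGcont.comp (continuous_id.prodMk continuous_const)
    have hev : ∀ᶠ s' : Set.Icc (0:ℝ) 1 in nhds s,
        ((Φ (Γ (s':ℝ)).1 0 (max t₁ 0), t₁) : (S × N) × ℝ) ∈ (closure W)ᶜ := by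
      refine hc.continuousAt.eventually_mem (isClosed_closure.isOpen_compl.mem_nhds ?_)
      rwa [max_eq_left ht₁]
    filter_upwards [hev] with s' h1
    intro (h2 : spEgressTime Φ W (Γ (s':ℝ)).1 = ⊤)
    rw [max_eq_left ht₁] at h1
    have hle := sigma_le (Γ (s':ℝ)).1 t₁ ht₁ (fun hm => h1 (subset_closure hm))
    rw [h2] at hle
    exact ENNReal.ofReal_ne_top (top_le_iff.mp hle)
  have h0mem : (⟨0, by constructor <;> norm_num⟩ : Set.Icc (0:ℝ) 1) ∈ A := base0
  have h1mem : (⟨1, by constructor <;> norm_num⟩ : Set.Icc (0:ℝ) 1) ∉ A := base1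
  rcases isClopen_iff.mp ⟨isOpen_compl_iff.mp hBopen, hAopen⟩ with hAe | hAu
  · rw [hAe] at h0mem; exact h0mem
  · rw [hAu] at h1mem; exact h1mem (Set.mem_univ _)
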